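/- Let $Y$ be a Polish space, $r \geq 1$, $p, q \in \mathcal{P}_r(Y)$, $\chi \in \Pi(q, p)$ a $\mathcal{W}_r$-optimal coupling with disintegration $(\chi_z)_{z\in Y}$ with respect to its first marginal $q$. For sub-probability measures $m_1,\ldots,m_N$ on $Y$ with $\sum_{i=1}^N m_i = q$, define $\chi m_i(dy) := \int_Y \chi_z(dy)\, m_i(dz)$. Then $\sum_{i=1}^N \mathcal{W}_r(\chi m_i / m_i(Y),\ m_i / m_i(Y))^r \, m_i(Y) \leq \mathcal{W}_r(p,q)^r$ and $\sum_{i=1}^N \chi m_i = p$. -/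

import Mathlib

open MeasureTheory Filter Topology ProbabilityTheory
open scoped ENNReal

noncomputable section

/-- A coupling of `μ` and `ν`: a measure on the product with the given marginals. -/
def IsCoupling {X Y : Type*} [MeasurableSpace X] [MeasurableSpace Y]
    (π : Measure (X × Y)) (μ : Measure X) (ν : Measure Y) : Prop :=
  π.map Prod.fst = μ ∧ π.map Prod.snd = ν

/-- `WrPow r p q` is the `r`-th power of the `r`-Wasserstein distance:
`inf { ∫ d(y₁,y₂)^r dπ : π coupling of p, q }`. -/
noncomputable def WrPow {Y : Type*} [MeasurableSpace Y] [PseudoMetricSpace Y]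
    (r : ℝ) (p q : Measure Y) : ℝ :=
  sInf {v | ∃ π : Measure (Y × Y), IsCoupling π p q ∧ v = ∫ z, dist z.1 z.2 ^ r ∂π}

/-- Convergence in the `r`-Wasserstein metric. -/
def TendstoWr {Y : Type*} [MeasurableSpace Y] [PseudoMetricSpace Y]
    (r : ℝ) (pk : ℕ → Measure Y) (p : Measure Y) : Prop :=
  Tendsto (fun k => WrPow r (pk k) p) atTop (nhds 0)

/-- Finite `r`-th moment. -/
def FiniteMomentR {Y : Type*} [MeasurableSpace Y] [PseudoMetricSpace Y]
    (r : ℝ) (p : Measure Y) : Prop :=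
  ∃ y0 : Y, Integrable (fun y => dist y y0 ^ r) p

/-- Membership in `𝒫_r(Y)`: a probability measure with finite `r`-th moment. -/
def MemPr {Y : Type*} [MeasurableSpace Y] [PseudoMetricSpace Y]
    (r : ℝ) (p : Measure Y) : Prop :=
  IsProbabilityMeasure p ∧ FiniteMomentR r p

-- helper lemmas
section helpers
variable {Y : Type*} [MeasurableSpace Y] [MetricSpace Y] [SecondCountableTopology Y] [BorelSpace Y]

lemma measurable_distRpow {r : ℝ} (hr : 0 ≤ r) :
    Measurable (fun z : Y × Y => dist z.1 z.2 ^ r) :=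
  ((Real.continuous_rpow_const hr).comp (continuous_fst.dist continuous_snd)).measurable

lemma nonneg_distRpow (r : ℝ) (z : Y × Y) : 0 ≤ dist z.1 z.2 ^ r :=
  Real.rpow_nonneg dist_nonneg r

lemma wrset_nonneg {r : ℝ} {p q : Measure Y} {v : ℝ}
    (hv : v ∈ {v | ∃ π : Measure (Y × Y), IsCoupling π p q ∧ v = ∫ z, dist z.1 z.2 ^ r ∂π}) :
    0 ≤ v := by
  obtain ⟨π, -, rfl⟩ := hv
  exact integral_nonneg (nonneg_distRpow r)

lemma wrset_bddBelow (r : ℝ) (p q : Measure Y) :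
    BddBelow {v | ∃ π : Measure (Y × Y), IsCoupling π p q ∧ v = ∫ z, dist z.1 z.2 ^ r ∂π} :=
  ⟨0, fun _ hv => wrset_nonneg hv⟩

lemma integral_map_swap {r : ℝ} (hr : 0 ≤ r) (π : Measure (Y × Y)) :
    ∫ z, dist z.1 z.2 ^ r ∂(π.map Prod.swap) = ∫ z, dist z.1 z.2 ^ r ∂π := by
  rw [integral_map measurable_swap.aemeasurable
    (measurable_distRpow hr).aestronglyMeasurable]
  simp only [Prod.fst_swap, Prod.snd_swap]
  congr 1
  ext z
  rw [dist_comm]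

lemma isCoupling_swap {π : Measure (Y × Y)} {μ ν : Measure Y} (h : IsCoupling π μ ν) :
    IsCoupling (π.map Prod.swap) ν μ := by
  constructor
  · rw [Measure.map_map measurable_fst measurable_swap]
    exact h.2
  · rw [Measure.map_map measurable_snd measurable_swap]
    exact h.1

lemma wrPow_symm {r : ℝ} (hr : 0 ≤ r) (p q : Measure Y) : WrPow r p q = WrPow r q p := by
  unfold WrPow
  congr 1
  ext v
  constructor
  · rintro ⟨π, hc, rfl⟩
    exact ⟨π.map Prod.swap, isCoupling_swap hc, (integral_map_swap hr π).symm⟩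
  · rintro ⟨π, hc, rfl⟩
    exact ⟨π.map Prod.swap, isCoupling_swap hc, (integral_map_swap hr π).symm⟩

lemma rpow_add_le {a b r : ℝ} (ha : 0 ≤ a) (hb : 0 ≤ b) (hr : 0 ≤ r) :
    (a + b) ^ r ≤ 2 ^ r * (a ^ r + b ^ r) := by
  have h1 : a + b ≤ 2 * max a b := by
    rcases le_total a b with h | h <;> simp [max_eq_right, max_eq_left, h] <;> linarith
  calc (a + b) ^ r ≤ (2 * max a b) ^ r :=
        Real.rpow_le_rpow (by positivity) h1 hr
    _ = 2 ^ r * (max a b) ^ r := Real.mul_rpow (by norm_num) (le_max_of_le_left ha)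
    _ ≤ 2 ^ r * (a ^ r + b ^ r) := by
        gcongr
        rcases le_total a b with h | h
        · rw [max_eq_right h]; nlinarith [Real.rpow_nonneg ha r]
        · rw [max_eq_left h]; nlinarith [Real.rpow_nonneg hb r]

end helpers

/-- **The kernel-transport inequality** (used in the proof of Theorem 2.3): if `χ`
is a `W_r`-optimal coupling of `q` and `p` with disintegration kernel `χ_z`, and
`m_1,…,m_N` are sub-probability measures with `∑ m_i = q`, then pushing each `m_i`
through the kernel, `χm_i := ∫ χ_z m_i(dz)`, satisfies
`∑ m_i(Y) · W_r(χm_i/m_i(Y), m_i/m_i(Y))^r ≤ W_r(p,q)^r` (terms with `m_i(Y) = 0`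
contribute `0`) and `∑ χm_i = p`. -/
theorem kernel_transport_inequality {Y : Type*}
    [MeasurableSpace Y] [MetricSpace Y] [PolishSpace Y] [BorelSpace Y] [Nonempty Y]
    (r : ℝ) (hr : 1 ≤ r)
    (p q : Measure Y) (hp : MemPr r p) (hq : MemPr r q)
    (χ : Measure (Y × Y)) [IsFiniteMeasure χ]
    (hχ : IsCoupling χ q p)
    (hopt : ∫ z, dist z.1 z.2 ^ r ∂χ = WrPow r q p)
    (N : ℕ) (m : Fin N → Measure Y)
    (hsub : ∀ i, m i Set.univ ≤ 1) (hsum : ∑ i, m i = q) :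
    (∑ i, (m i Set.univ).toReal *
        WrPow r ((m i Set.univ)⁻¹ • (m i).bind (fun z => χ.condKernel z))
          ((m i Set.univ)⁻¹ • m i) ≤ WrPow r p q) ∧
    (∑ i, (m i).bind (fun z => χ.condKernel z)) = p := by
  obtain ⟨hp1, y1, hy1⟩ := hp
  obtain ⟨hq1, y0, hy0⟩ := hq
  have hr0 : (0:ℝ) ≤ r := le_trans zero_le_one hr
  set κ := χ.condKernel with hκ
  haveI hfin : ∀ i, IsFiniteMeasure (m i) := fun i =>
    ⟨lt_of_le_of_lt (hsub i) ENNReal.one_lt_top⟩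
  have hfst : χ.fst = q := hχ.1
  have hcomp : q ⊗ₘ κ = χ := by rw [← hfst]; exact χ.disintegrate _
  have hsumcomp : (∑ i, (m i) ⊗ₘ κ) = χ := by
    ext s hs
    calc (∑ i, (m i) ⊗ₘ κ) s = ∑ i, ((m i) ⊗ₘ κ) s := by
          rw [Measure.finset_sum_apply]
      _ = ∑ i, ∫⁻ x, κ x (Prod.mk x ⁻¹' s) ∂(m i) := by
          simp_rw [Measure.compProd_apply hs]
      _ = ∫⁻ x, κ x (Prod.mk x ⁻¹' s) ∂q := by
          rw [← hsum, lintegral_finset_sum_measure]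
      _ = (q ⊗ₘ κ) s := (Measure.compProd_apply hs).symm
      _ = χ s := by rw [hcomp]
  have hbind : ∀ (μ : Measure Y) [SFinite μ],
      (μ ⊗ₘ κ).map Prod.snd = μ.bind (fun z => κ z) := by
    intro μ _
    ext s hs
    rw [Measure.map_apply measurable_snd hs, Measure.compProd_apply (measurable_snd hs),
        Measure.bind_apply hs κ.measurable.aemeasurable]
    rfl
  have hfstcomp : ∀ (μ : Measure Y) [SFinite μ], (μ ⊗ₘ κ).map Prod.fst = μ := by
    intro μ _
    exact Measure.fst_compProd μ κ
  have hgoal2 : (∑ i, (m i).bind (fun z => κ z)) = p := by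
    have hmap : (∑ i, (m i) ⊗ₘ κ).map Prod.snd = ∑ i, ((m i) ⊗ₘ κ).map Prod.snd := by
      ext s hs
      simp [Measure.map_apply measurable_snd hs, Measure.finset_sum_apply]
    calc (∑ i, (m i).bind (fun z => κ z)) = ∑ i, ((m i) ⊗ₘ κ).map Prod.snd := by
          simp_rw [hbind]
      _ = (∑ i, (m i) ⊗ₘ κ).map Prod.snd := hmap.symm
      _ = χ.map Prod.snd := by rw [hsumcomp]
      _ = p := hχ.2
  -- integrability of the cost wrt χ
  have hmf := measurable_distRpow (Y := Y) hr0
  have hIq : Integrable (fun z : Y × Y => dist z.1 y0 ^ r) χ := by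
    have h0 : Integrable (fun y => dist y y0 ^ r) (χ.map Prod.fst) := by rw [hχ.1]; exact hy0
    exact (integrable_map_measure
      (((Real.continuous_rpow_const hr0).comp (continuous_id.dist continuous_const)).measurable.aestronglyMeasurable)
      measurable_fst.aemeasurable).mp h0
  have hIp : Integrable (fun z : Y × Y => dist z.2 y1 ^ r) χ := by
    have h0 : Integrable (fun y => dist y y1 ^ r) (χ.map Prod.snd) := by rw [hχ.2]; exact hy1
    exact (integrable_map_measure
      (((Real.continuous_rpow_const hr0).comp (continuous_id.dist continuous_const)).measurable.aestronglyMeasurable)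
      measurable_snd.aemeasurable).mp h0
  have hfχ : Integrable (fun z : Y × Y => dist z.1 z.2 ^ r) χ := by
    have hg : Integrable (fun z : Y × Y =>
        2 ^ r * (dist z.1 y0 ^ r) + (2 ^ r * 2 ^ r) * (dist z.2 y1 ^ r)
          + (2 ^ r * 2 ^ r) * (dist y1 y0 ^ r)) χ :=
      ((hIq.const_mul _).add (hIp.const_mul _)).add (integrable_const _)
    refine hg.mono' hmf.aestronglyMeasurable (Filter.Eventually.of_forall fun z => ?_)
    rw [Real.norm_of_nonneg (nonneg_distRpow r z)]
    have h1 : dist z.1 z.2 ^ r ≤ 2 ^ r * (dist z.1 y0 ^ r + dist y0 z.2 ^ r) :=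
      le_trans (Real.rpow_le_rpow dist_nonneg (dist_triangle _ _ _) hr0)
        (rpow_add_le dist_nonneg dist_nonneg hr0)
    have h2 : dist y0 z.2 ^ r ≤ 2 ^ r * (dist z.2 y1 ^ r + dist y1 y0 ^ r) := by
      rw [dist_comm]
      exact le_trans (Real.rpow_le_rpow dist_nonneg (dist_triangle _ _ _) hr0)
        (rpow_add_le dist_nonneg dist_nonneg hr0)
    have h2r : (0:ℝ) ≤ 2 ^ r := Real.rpow_nonneg (by norm_num) r
    nlinarith [Real.rpow_nonneg (dist_nonneg (x := z.1) (y := y0)) r]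
  -- the per-index inequality
  have key : ∀ i, (m i Set.univ).toReal *
      WrPow r ((m i Set.univ)⁻¹ • (m i).bind (fun z => κ z)) ((m i Set.univ)⁻¹ • m i)
        ≤ ∫ z, dist z.1 z.2 ^ r ∂((m i) ⊗ₘ κ) := by
    intro i
    rcases eq_or_ne (m i Set.univ) 0 with hc | hc
    · rw [hc]
      simp only [ENNReal.toReal_zero, zero_mul]
      exact integral_nonneg (nonneg_distRpow r)
    · set c := m i Set.univ with hcdef
      have hcne : c ≠ ⊤ := (lt_of_le_of_lt (hsub i) ENNReal.one_lt_top).ne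
      have hct : c.toReal ≠ 0 := ENNReal.toReal_ne_zero.mpr ⟨hc, hcne⟩
      set π := ((m i ⊗ₘ κ).map Prod.swap) with hπ
      have hπc : IsCoupling (c⁻¹ • π) (c⁻¹ • (m i).bind (fun z => κ z)) (c⁻¹ • m i) := by
        constructor
        · rw [Measure.map_smul, hπ, Measure.map_map measurable_fst measurable_swap]
          have he : (Prod.fst ∘ Prod.swap : Y × Y → Y) = Prod.snd := rfl
          rw [he, hbind (m i)]
        · rw [Measure.map_smul, hπ, Measure.map_map measurable_snd measurable_swap]
          have he : (Prod.snd ∘ Prod.swap : Y × Y → Y) = Prod.fst := rfl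
          rw [he, hfstcomp (m i)]
      have hmem : (c⁻¹.toReal * ∫ z, dist z.1 z.2 ^ r ∂((m i) ⊗ₘ κ)) ∈
          {v | ∃ π : Measure (Y × Y),
            IsCoupling π (c⁻¹ • (m i).bind (fun z => κ z)) (c⁻¹ • m i) ∧
            v = ∫ z, dist z.1 z.2 ^ r ∂π} := by
        refine ⟨c⁻¹ • π, hπc, ?_⟩
        rw [integral_smul_measure, hπ, integral_map_swap hr0, smul_eq_mul]
      have hle := csInf_le (wrset_bddBelow r _ _) hmem
      have hI0 : 0 ≤ ∫ z, dist z.1 z.2 ^ r ∂((m i) ⊗ₘ κ) := integral_nonneg (nonneg_distRpow r)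
      calc c.toReal * WrPow r (c⁻¹ • (m i).bind (fun z => κ z)) (c⁻¹ • m i)
          ≤ c.toReal * (c⁻¹.toReal * ∫ z, dist z.1 z.2 ^ r ∂((m i) ⊗ₘ κ)) :=
            mul_le_mul_of_nonneg_left hle ENNReal.toReal_nonneg
        _ = ∫ z, dist z.1 z.2 ^ r ∂((m i) ⊗ₘ κ) := by
            rw [ENNReal.toReal_inv, ← mul_assoc, mul_inv_cancel₀ hct, one_mul]
  refine ⟨?_, hgoal2⟩
  calc ∑ i, (m i Set.univ).toReal *
        WrPow r ((m i Set.univ)⁻¹ • (m i).bind (fun z => κ z)) ((m i Set.univ)⁻¹ • m i)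
      ≤ ∑ i, ∫ z, dist z.1 z.2 ^ r ∂((m i) ⊗ₘ κ) :=
        Finset.sum_le_sum fun i _ => key i
    _ = ∫ z, dist z.1 z.2 ^ r ∂(∑ i, (m i) ⊗ₘ κ) := by
        refine (integral_finset_sum_measure fun i _ => ?_).symm
        refine hfχ.mono_measure ?_
        rw [← hsumcomp]
        refine Measure.le_iff'.mpr fun s => ?_
        rw [Measure.finset_sum_apply]
        exact Finset.single_le_sum (f := fun j => ((m j) ⊗ₘ κ) s) (fun j _ => zero_le)
          (Finset.mem_univ i)
    _ = ∫ z, dist z.1 z.2 ^ r ∂χ := by rw [hsumcomp]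
    _ = WrPow r q p := hopt
    _ = WrPow r p q := wrPow_symm hr0 q p
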